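/- Let M ∈ ℝ, c ∈ ℝ with c ≠ 0, and let H be the map H(x,y) = (x̄, ȳ) with x̄ = M + c·x − y², ȳ = (y + x̄² − M)/c. Then H has a fixed point (x₀, x₀) on the diagonal at which the Jacobian matrix of H has eigenvalue +1 if and only if 4M = −(c − 1)² or 4M = 3(c − 1)². (These are the fold curve F₀ and the pitchfork curve PF of the family H.) -/
import Mathlib


/-- The map `H(x,y) = (x̄, ȳ)` with `x̄ = M + c·x − y²` and `ȳ = (y + x̄² − M)/c`,
the explicit form of the implicit system `x̄ = M + c·x − y²`, `c·ȳ = −M + y + x̄²`. -/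
noncomputable def Hmap (M c : ℝ) (p : ℝ × ℝ) : ℝ × ℝ :=
  (M + c * p.1 - p.2 ^ 2,
    (p.2 + (M + c * p.1 - p.2 ^ 2) ^ 2 - M) / c)

/-- The Jacobian matrix (2×2 real derivative matrix) of `Hmap M c` at the point
`(x,y)`, where `x̄ = M + c·x − y²`:
`[[c, −2y], [2x̄, (1 − 4x̄y)/c]]`. -/
noncomputable def HJac (M c : ℝ) (p : ℝ × ℝ) : Matrix (Fin 2) (Fin 2) ℝ :=
  !![c, -2 * p.2;
     2 * (M + c * p.1 - p.2 ^ 2), (1 - 4 * (M + c * p.1 - p.2 ^ 2) * p.2) / c]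

/-- `μ ∈ ℂ` is an eigenvalue of the real 2×2 matrix `A`
(eigenvalues of real matrices are taken over `ℂ`). -/
def hasEigenvalue (A : Matrix (Fin 2) (Fin 2) ℝ) (μ : ℂ) : Prop :=
  (A.map (fun t : ℝ => (t : ℂ)) - μ • 1).det = 0

/-- `H` has a diagonal fixed point at which the Jacobian matrix has
eigenvalue `+1` iff `4M = −(c−1)²` (fold curve `F₀`) or `4M = 3(c−1)²` (pitchfork
curve `PF`). -/
theorem stmt_12 (M c : ℝ) (hc : c ≠ 0) :
    (∃ x₀ : ℝ, Hmap M c (x₀, x₀) = (x₀, x₀) ∧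
        hasEigenvalue (HJac M c (x₀, x₀)) 1) ↔
      (4 * M = -(c - 1) ^ 2 ∨ 4 * M = 3 * (c - 1) ^ 2) := by
  have key : ∀ A : Matrix (Fin 2) (Fin 2) ℝ, hasEigenvalue A 1 ↔ (A - 1).det = 0 := by
    intro A
    unfold hasEigenvalue
    have h : A.map (fun t : ℝ => (t : ℂ)) - (1 : ℂ) • 1 =
        (Complex.ofRealHom.mapMatrix (A - 1) : Matrix (Fin 2) (Fin 2) ℂ) := by
      ext i j
      by_cases hij : i = j <;>
        simp [Matrix.map_apply, Matrix.one_apply, hij, Complex.ofRealHom]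
    rw [h, ← RingHom.map_det]
    simp [Complex.ofRealHom]
  constructor
  · rintro ⟨x₀, hfix, heig⟩
    rw [key] at heig
    simp only [Hmap, Prod.mk.injEq] at hfix
    obtain ⟨h1, _⟩ := hfix
    rw [Matrix.det_fin_two] at heig
    simp only [HJac, Matrix.sub_apply, Matrix.one_apply, Matrix.cons_val', Matrix.cons_val_zero,
      Matrix.cons_val_one, Matrix.head_cons, Matrix.empty_val', Matrix.cons_val_fin_one,
      Matrix.head_fin_const] at heig
    norm_num at heig
    rw [h1] at heig
    field_simp at heig
    have hM : M = x₀ ^ 2 + (1 - c) * x₀ := by linear_combination h1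
    have hx : (2 * x₀ - (c - 1)) * (2 * x₀ + (c - 1)) = 0 := by linear_combination heig
    rcases mul_eq_zero.1 hx with h | h
    · left; nlinarith
    · right; nlinarith
  · intro h
    rcases h with h | h
    · have hM : M = -(c - 1) ^ 2 / 4 := by linarith
      subst hM
      refine ⟨(c - 1) / 2, ?_, ?_⟩
      · simp only [Hmap, Prod.mk.injEq]
        constructor
        · ring
        · field_simp
          ring
      · rw [key, Matrix.det_fin_two]
        simp only [HJac, Matrix.sub_apply, Matrix.one_apply, Matrix.cons_val',
          Matrix.cons_val_zero, Matrix.cons_val_one, Matrix.head_cons, Matrix.empty_val',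
          Matrix.cons_val_fin_one, Matrix.head_fin_const]
        norm_num
        field_simp
        ring
    · have hM : M = 3 * (c - 1) ^ 2 / 4 := by linarith
      subst hM
      refine ⟨-(c - 1) / 2, ?_, ?_⟩
      · simp only [Hmap, Prod.mk.injEq]
        constructor
        · ring
        · field_simp
          ring
      · rw [key, Matrix.det_fin_two]
        simp only [HJac, Matrix.sub_apply, Matrix.one_apply, Matrix.cons_val',
          Matrix.cons_val_zero, Matrix.cons_val_one, Matrix.head_cons, Matrix.empty_val',
          Matrix.cons_val_fin_one, Matrix.head_fin_const]
        norm_num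
        field_simp
        ring
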